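/- The kernel of the group homomorphism θ : Pin(n) → O(n), θ(a)(x) = a x ã, is exactly {1, -1}, for n ≥ 1. -/

import Mathlib

open scoped RealInnerProductSpace
noncomputable section

/-- The quadratic form `x ↦ -‖x‖²` on `ℝⁿ`. -/
def Qn (n : ℕ) : QuadraticForm ℝ (EuclideanSpace ℝ (Fin n)) :=
  -(LinearMap.BilinMap.toQuadraticMap (innerₗ (EuclideanSpace ℝ (Fin n))))

/-- The Clifford algebra `Cl_n` generated from `ℝⁿ` by the relation `x² = -‖x‖²`. -/
abbrev Cl (n : ℕ) := CliffordAlgebra (Qn n)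

/-- The canonical embedding `ℝⁿ ⊆ Cl_n`. -/
def ιn (n : ℕ) : EuclideanSpace ℝ (Fin n) →ₗ[ℝ] Cl n := CliffordAlgebra.ι (Qn n)

/-- `Pin(n)`: the set of products of unit vectors of `ℝⁿ` inside `Cl_n`. -/
def IsPin (n : ℕ) (a : Cl n) : Prop :=
  ∃ l : List (EuclideanSpace ℝ (Fin n)),
    (∀ y ∈ l, ‖y‖ = 1) ∧ a = (l.map fun y => ιn n y).prod

namespace PinAux
open CliffordAlgebra
variable {n : ℕ}

abbrev Vn (n : ℕ) := EuclideanSpace ℝ (Fin n)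
abbrev Q0 (n : ℕ) : QuadraticForm ℝ (Vn n) := 0
abbrev Ext (n : ℕ) := CliffordAlgebra (Q0 n)

def bV (n : ℕ) : Module.Basis (Fin n) ℝ (Vn n) := PiLp.basisFun 2 ℝ (Fin n)

lemma bV_apply (i : Fin n) : bV n i = EuclideanSpace.single i 1 := by
  rw [bV, PiLp.basisFun_apply]

lemma bV_coord (i : Fin n) (y : Vn n) : (bV n).coord i y = y i := by
  simp [bV, Module.Basis.coord_apply, PiLp.basisFun_repr]

lemma inner_bV (i : Fin n) (y : Vn n) : ⟪bV n i, y⟫ = y i := by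
  rw [bV_apply, EuclideanSpace.inner_single_left]
  simp

lemma Qn_apply (x : Vn n) : Qn n x = -⟪x, x⟫ := rfl

lemma polar_Qn (x y : Vn n) :
    QuadraticMap.polar (Qn n) x y = -(2 * ⟪x, y⟫) := by
  simp only [QuadraticMap.polar, Qn_apply, inner_add_add_self]
  ring_nf
  rw [real_inner_comm y x]
  ring

/-- The key algebraic identity: the twisted commutator with a vector is a contraction. -/
lemma ident (x : Vn n) (a : Cl n) :
    ι (Qn n) x * a - involute a * ι (Qn n) x
      = contractLeft ((Qn n).polarBilin x) a := by
  induction a using CliffordAlgebra.left_induction with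
  | algebraMap r => simp [Algebra.commutes]
  | add u v hu hv => simp only [map_add, mul_add, add_mul, ← hu, ← hv]; abel
  | ι_mul b m hb =>
      have hinv : involute b * ι (Qn n) x
          = ι (Qn n) x * b - contractLeft ((Qn n).polarBilin x) b := by
        rw [← hb]; noncomm_ring
      have hswap : ι (Qn n) x * ι (Qn n) m + ι (Qn n) m * ι (Qn n) x
          = algebraMap ℝ _ (QuadraticMap.polar (Qn n) x m) := ι_mul_ι_add_swap x m
      rw [contractLeft_ι_mul]
      calc ι (Qn n) x * (ι (Qn n) m * b) - involute (ι (Qn n) m * b) * ι (Qn n) x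
          = ι (Qn n) x * (ι (Qn n) m * b) + ι (Qn n) m * (involute b * ι (Qn n) x) := by
            rw [map_mul, involute_ι]; noncomm_ring
        _ = ι (Qn n) x * (ι (Qn n) m * b)
              + ι (Qn n) m * (ι (Qn n) x * b - contractLeft ((Qn n).polarBilin x) b) := by
            rw [hinv]
        _ = (ι (Qn n) x * ι (Qn n) m + ι (Qn n) m * ι (Qn n) x) * b
              - ι (Qn n) m * contractLeft ((Qn n).polarBilin x) b := by noncomm_ring
        _ = ((Qn n).polarBilin x) m • b - ι (Qn n) m * contractLeft ((Qn n).polarBilin x) b := by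
            rw [hswap, Algebra.smul_def, QuadraticMap.polarBilin_apply_apply]

/-- The number operator on the exterior algebra. -/
def Dop (n : ℕ) : Ext n →ₗ[ℝ] Ext n :=
  ∑ i : Fin n, (LinearMap.mulLeft ℝ (ι (Q0 n) (bV n i))).comp
      (contractLeft (Q := Q0 n) ((bV n).coord i))

lemma ι0_anticomm (u v : Vn n) : ι (Q0 n) u * ι (Q0 n) v = -(ι (Q0 n) v * ι (Q0 n) u) := by
  have h := ι_mul_ι_add_swap (Q := Q0 n) u v
  rw [QuadraticMap.polar] at h
  simp only [QuadraticMap.zero_apply, sub_zero, sub_self, map_zero] at h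
  linear_combination (norm := noncomm_ring) h

lemma sum_coord_smul_ι (v : Vn n) :
    ∑ i : Fin n, ((bV n).coord i v) • ι (Q0 n) (bV n i) = ι (Q0 n) v := by
  simp_rw [← map_smul]
  rw [← map_sum]
  congr 1
  simp_rw [Module.Basis.coord_apply]
  exact (bV n).sum_repr v

lemma Dop_ι_mul (v : Vn n) (c : Ext n) :
    Dop n (ι (Q0 n) v * c) = ι (Q0 n) v * c + ι (Q0 n) v * Dop n c := by
  have h1 : ∀ i : Fin n,
      ι (Q0 n) (bV n i) * (contractLeft (Q := Q0 n) ((bV n).coord i) (ι (Q0 n) v * c))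
      = ((bV n).coord i v) • (ι (Q0 n) (bV n i) * c)
        + ι (Q0 n) v * (ι (Q0 n) (bV n i)
            * (contractLeft (Q := Q0 n) ((bV n).coord i) c)) := by
    intro i
    rw [contractLeft_ι_mul, mul_sub, mul_smul_comm, ← mul_assoc, ι0_anticomm _ v, neg_mul,
      sub_neg_eq_add, mul_assoc]
  simp only [Dop, LinearMap.sum_apply, LinearMap.comp_apply, LinearMap.mulLeft_apply, h1]
  rw [Finset.sum_add_distrib, ← Finset.mul_sum]
  congr 1
  simp only [← smul_mul_assoc]
  rw [← Finset.sum_mul, sum_coord_smul_ι]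

lemma Dop_grade (k : ℕ) (x : Ext n)
    (hx : x ∈ (LinearMap.range (ι (Q0 n)) ^ k : Submodule ℝ (Ext n))) :
    Dop n x = k • x := by
  induction hx using Submodule.pow_induction_on_left' with
  | algebraMap r =>
      simp [Dop, contractLeft_algebraMap]
  | add x y i hx hy ihx ihy => rw [map_add, ihx, ihy, smul_add]
  | mem_mul m hm i x hx ih =>
      obtain ⟨v, rfl⟩ := hm
      rw [Dop_ι_mul, ih, mul_smul_comm, succ_nsmul, add_comm]

local notation "𝒜" => (fun i : ℕ => ⋀[ℝ]^i (Vn n))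

lemma decompose_Dop (y : Ext n) (k : ℕ) :
    (DirectSum.decompose 𝒜 (Dop n y) k : Ext n)
      = k • (DirectSum.decompose 𝒜 y k : Ext n) := by
  induction y using DirectSum.Decomposition.inductionOn 𝒜 with
  | zero => simp
  | @homogeneous i m =>
      have hm : (m : Ext n) ∈ (LinearMap.range (ι (Q0 n)) ^ i : Submodule ℝ (Ext n)) := m.2
      have hD : Dop n (m : Ext n) = i • (m : Ext n) := Dop_grade i _ hm
      rw [hD]
      rcases eq_or_ne i k with rfl | hik
      · rw [DirectSum.decompose_of_mem_same 𝒜 (nsmul_mem m.2 _),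
          DirectSum.decompose_of_mem_same 𝒜 m.2]
      · rw [DirectSum.decompose_of_mem_ne 𝒜 (nsmul_mem m.2 _) hik,
          DirectSum.decompose_of_mem_ne 𝒜 m.2 hik, smul_zero]
  | add x y hx hy =>
      rw [map_add, DirectSum.decompose_add, DirectSum.decompose_add, DirectSum.add_apply,
        DirectSum.add_apply, Submodule.coe_add, Submodule.coe_add, hx, hy, smul_add]

lemma scalar_of_contract_zero (b : Ext n)
    (h : ∀ i : Fin n, contractLeft (Q := Q0 n) ((bV n).coord i) b = 0) :
    ∃ r : ℝ, b = algebraMap ℝ (Ext n) r := by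
  classical
  have hD : Dop n b = 0 := by
    simp [Dop, h]
  have hk : ∀ k : ℕ, k ≠ 0 → (DirectSum.decompose 𝒜 b k : Ext n) = 0 := by
    intro k hk0
    have h2 := decompose_Dop b k
    rw [hD] at h2
    simp only [DirectSum.decompose_zero, DirectSum.zero_apply, ZeroMemClass.coe_zero] at h2
    have h3 : (k : ℝ) • (DirectSum.decompose 𝒜 b k : Ext n) = 0 := by
      rw [Nat.cast_smul_eq_nsmul, ← h2]
    rcases smul_eq_zero.mp h3 with h4 | h4
    · exact absurd (Nat.cast_eq_zero.mp h4) hk0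
    · exact h4
  have hmem : b ∈ (⋀[ℝ]^0 (Vn n)) := by
    have hb := DirectSum.sum_support_decompose 𝒜 b
    rw [← hb]
    apply Submodule.sum_mem
    intro i _
    rcases eq_or_ne i 0 with rfl | hne
    · exact ((DirectSum.decompose 𝒜 b) 0).2
    · rw [hk i hne]; exact Submodule.zero_mem _
  have h0 : (⋀[ℝ]^0 (Vn n)) = (1 : Submodule ℝ (Ext n)) := pow_zero _
  rw [h0] at hmem
  obtain ⟨r, hr⟩ := Submodule.mem_one.mp hmem
  exact ⟨r, hr.symm⟩

lemma algebraMap_Cl_injective : Function.Injective (algebraMap ℝ (Cl n)) := by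
  haveI : Invertible (2 : ℝ) := invertibleOfNonzero two_ne_zero
  intro s t hst
  have h1 : equivExterior (Qn n) (algebraMap ℝ (Cl n) s)
      = equivExterior (Qn n) (algebraMap ℝ (Cl n) t) := by rw [hst]
  have h2 : ∀ r : ℝ, equivExterior (Qn n) (algebraMap ℝ (Cl n) r)
      = algebraMap ℝ (ExteriorAlgebra ℝ (Vn n)) r := fun r =>
    changeForm_algebraMap changeForm.associated_neg_proof r
  rw [h2, h2] at h1
  exact (ExteriorAlgebra.algebraMap_leftInverse (Vn n)).injective h1

/-- The twisted-centralizer lemma: if `ι x * a = involute a * ι x` for all `x`, then `a` is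
a scalar. -/
lemma twisted (a : Cl n) (h : ∀ x, ι (Qn n) x * a = involute a * ι (Qn n) x) :
    ∃ r : ℝ, a = algebraMap ℝ (Cl n) r := by
  haveI : Invertible (2 : ℝ) := invertibleOfNonzero two_ne_zero
  have hc : ∀ x, contractLeft (Q := Qn n) ((Qn n).polarBilin x) a = 0 := fun x => by
    rw [← ident, h x, sub_self]
  have hcoord : ∀ i : Fin n, contractLeft (Q := Qn n) ((bV n).coord i) a = 0 := by
    intro i
    have hxd : ((bV n).coord i) = (Qn n).polarBilin ((-(2⁻¹ : ℝ)) • bV n i) := by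
      ext y
      rw [QuadraticMap.polarBilin_apply_apply, polar_Qn, real_inner_smul_left, bV_coord,
        inner_bV]
      ring
    rw [hxd]
    exact hc _
  have hφ : ∀ i : Fin n, contractLeft (Q := Q0 n) ((bV n).coord i)
      (equivExterior (Qn n) a) = 0 := by
    intro i
    have h3 := changeForm_contractLeft (h := changeForm.associated_neg_proof (Q := Qn n))
        ((bV n).coord i) a
    have h4 : equivExterior (Qn n) (contractLeft (Q := Qn n) ((bV n).coord i) a)
        = contractLeft (Q := Q0 n) ((bV n).coord i) (equivExterior (Qn n) a) := h3
    rw [← h4, hcoord i, map_zero]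
  obtain ⟨r, hr⟩ := scalar_of_contract_zero (equivExterior (Qn n) a) hφ
  refine ⟨r, (equivExterior (Qn n)).injective ?_⟩
  rw [hr]
  exact (changeForm_algebraMap changeForm.associated_neg_proof r).symm

lemma ι_unit_sq (y : Vn n) (hy : ‖y‖ = 1) : ι (Qn n) y * ι (Qn n) y = -1 := by
  rw [ι_sq_scalar]
  have : Qn n y = -1 := by
    rw [Qn_apply, real_inner_self_eq_norm_sq, hy]; norm_num
  rw [this, map_neg, map_one]

lemma prod_mul_reverse : ∀ l : List (Vn n), (∀ y ∈ l, ‖y‖ = 1) →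
    (l.map (ι (Qn n))).prod * reverse (l.map (ι (Qn n))).prod = (-1 : Cl n) ^ l.length
  | [], _ => by simp
  | y :: t, h => by
    have ht := prod_mul_reverse t (fun z hz => h z (List.mem_cons_of_mem _ hz))
    have hy := h y List.mem_cons_self
    simp only [List.map_cons, List.prod_cons, List.length_cons]
    rw [reverse.map_mul, reverse_ι]
    have e1 : ι (Qn n) y * (t.map (ι (Qn n))).prod
        * (reverse (t.map (ι (Qn n))).prod * ι (Qn n) y)
        = ι (Qn n) y * ((t.map (ι (Qn n))).prod * reverse (t.map (ι (Qn n))).prod)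
          * ι (Qn n) y := by noncomm_ring
    rw [e1, ht]
    have e2 : ((-1 : Cl n)) ^ t.length = algebraMap ℝ (Cl n) ((-1 : ℝ) ^ t.length) := by
      rw [map_pow, map_neg, map_one]
    rw [e2, ← Algebra.commutes ((-1 : ℝ) ^ t.length) (ι (Qn n) y), mul_assoc,
      ι_unit_sq y hy, pow_succ, ← e2]

lemma reverse_mul_self (l : List (Vn n)) (hl : ∀ y ∈ l, ‖y‖ = 1) :
    reverse (l.map (ι (Qn n))).prod * (l.map (ι (Qn n))).prod = (-1 : Cl n) ^ l.length := by
  have h1 : reverse (l.map (ι (Qn n))).prod = (l.reverse.map (ι (Qn n))).prod := by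
    rw [reverse_prod_map_ι, List.map_reverse]
  have h2 := prod_mul_reverse l.reverse (fun z hz => hl z (List.mem_reverse.mp hz))
  have h3 : reverse ((l.reverse.map (ι (Qn n))).prod) = (l.map (ι (Qn n))).prod := by
    rw [reverse_prod_map_ι, List.map_reverse, List.reverse_reverse]
  rw [h1, ← h3]
  simpa using h2

end PinAux

open PinAux CliffordAlgebra in
/-- The kernel of the homomorphism `θ : Pin(n) → O(n)`, `θ(a)(x) = a x ã`, is exactly
`{1, -1}` (for `n ≥ 1`): an element `a ∈ Pin(n)` acts trivially on `ℝⁿ` iff `a = ±1`. -/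
theorem stmt3 (n : ℕ) (hn : 1 ≤ n) (a : Cl n) (ha : IsPin n a) :
    (∀ x, a * ιn n x * CliffordAlgebra.reverse a = ιn n x) ↔ (a = 1 ∨ a = -1) := by
  constructor
  · intro h
    obtain ⟨l, hl, rfl⟩ := ha
    have hι : ιn n = ι (Qn n) := rfl
    simp only [hι] at h ⊢
    set P : Cl n := (l.map (ι (Qn n))).prod with hP
    set k := l.length with hk
    have h1 : reverse P * P = (-1 : Cl n) ^ k := reverse_mul_self l hl
    have h1' : P * reverse P = (-1 : Cl n) ^ k := prod_mul_reverse l hl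
    have hpow : ((-1 : Cl n)) ^ k = algebraMap ℝ (Cl n) ((-1 : ℝ) ^ k) := by
      rw [map_pow, map_neg, map_one]
    have h2 : ∀ x, ι (Qn n) x * P = involute P * ι (Qn n) x := by
      intro x
      have h3 := congrArg (· * P) (h x)
      rw [mul_assoc, mul_assoc, h1, ← mul_assoc] at h3
      have h4 : involute P = ((-1 : ℝ) ^ k) • P := by
        simpa using involute_prod_map_ι (Q := Qn n) l
      rw [h4, smul_mul_assoc, ← h3, hpow, ← Algebra.commutes, ← Algebra.smul_def]
    obtain ⟨r, hr⟩ := twisted P h2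
    have h5 : algebraMap ℝ (Cl n) (r * r) = algebraMap ℝ (Cl n) ((-1 : ℝ) ^ k) := by
      rw [map_mul]
      rw [hr] at h1'
      rw [reverse.commutes] at h1'
      rw [h1', hpow]
    have h6 : r * r = (-1 : ℝ) ^ k := algebraMap_Cl_injective h5
    have h7 : r * r = 1 := by
      rcases Nat.even_or_odd k with he | ho
      · rwa [he.neg_one_pow] at h6
      · rw [ho.neg_one_pow] at h6
        nlinarith [mul_self_nonneg r]
    rcases mul_self_eq_one_iff.mp h7 with rfl | rfl
    · left; rw [hr, map_one]
    · right; rw [hr, map_neg, map_one]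
  · rintro (rfl | rfl) x
    · simp
    · simp [map_neg]
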